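/- Let E be a Hausdorff topological real vector space and M ⊆ E a nonempty compact convex set. Let F : E → ℝ be continuous on M and convex on M, and let H : E → ℝ be continuous on M, strictly convex on M, and nonnegative on M. For each ε > 0 let μ_ε ∈ M be a minimizer of μ ↦ F(μ) + ε·H(μ) over M. Then there exists a unique μ* ∈ M such that: (i) μ_ε converges to μ* as ε ↓ 0 (i.e., along every sequence ε_n ↓ 0); (ii) μ* minimizes F over M; and (iii) μ* is the unique minimizer of H over the set argmin_{μ∈M} F(μ). -/

import Mathlib

open Filter

/-- Auxiliary: properties of any limit along an ultrafilter of penalized minimizers. -/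
theorem penalized_aux_limit
    {E : Type*} [TopologicalSpace E]
    (M : Set E) (F H : E → ℝ)
    (hFcont : ContinuousOn F M) (hHcont : ContinuousOn H M)
    (hHnonneg : ∀ m ∈ M, 0 ≤ H m)
    (μ : ℝ → E)
    (hμmem : ∀ ε : ℝ, 0 < ε → μ ε ∈ M)
    (hμopt : ∀ ε : ℝ, 0 < ε → ∀ m ∈ M, F (μ ε) + ε * H (μ ε) ≤ F m + ε * H m)
    (εs : ℕ → ℝ) (hpos : ∀ n, 0 < εs n)
    (𝒰 : Ultrafilter ℕ) (hle : (𝒰 : Filter ℕ) ≤ Filter.atTop)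
    (hεs : Filter.Tendsto εs Filter.atTop (nhds 0))
    (m : E) (hm : m ∈ M)
    (hconv : Filter.Tendsto (fun n => μ (εs n)) 𝒰 (nhds m)) :
    (∀ m' ∈ M, F m ≤ F m') ∧
      (∀ a ∈ M, (∀ m' ∈ M, F a ≤ F m') → H m ≤ H a) := by
  have hmem : ∀ n, μ (εs n) ∈ M := fun n => hμmem _ (hpos n)
  have hconvW : Filter.Tendsto (fun n => μ (εs n)) 𝒰 (nhdsWithin m M) :=
    tendsto_nhdsWithin_iff.2 ⟨hconv, Filter.Eventually.of_forall hmem⟩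
  have hF : Filter.Tendsto (fun n => F (μ (εs n))) 𝒰 (nhds (F m)) :=
    Filter.Tendsto.comp (hFcont m hm) hconvW
  have hH : Filter.Tendsto (fun n => H (μ (εs n))) 𝒰 (nhds (H m)) :=
    Filter.Tendsto.comp (hHcont m hm) hconvW
  have hε𝒰 : Filter.Tendsto εs 𝒰 (nhds 0) := hεs.mono_left hle
  constructor
  · intro m' hm'
    have key : ∀ n, F (μ (εs n)) ≤ F m' + εs n * H m' := by
      intro n
      have h1 := hμopt _ (hpos n) m' hm'
      nlinarith [mul_nonneg (hpos n).le (hHnonneg _ (hmem n))]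
    have hRHS : Filter.Tendsto (fun n => F m' + εs n * H m') 𝒰 (nhds (F m')) := by
      simpa using tendsto_const_nhds.add (hε𝒰.mul_const (H m'))
    exact le_of_tendsto_of_tendsto' hF hRHS key
  · intro a ha haF
    have key : ∀ n, H (μ (εs n)) ≤ H a := by
      intro n
      have h1 := hμopt _ (hpos n) a ha
      have h2 : F a ≤ F (μ (εs n)) := haF _ (hmem n)
      have h3 : εs n * H (μ (εs n)) ≤ εs n * H a := by linarith
      exact le_of_mul_le_mul_left h3 (hpos n)
    exact le_of_tendsto' hH key

/-- Convergence of penalized minimizers: on a nonempty compact convex subset `M` of a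
Hausdorff topological real vector space, with `F` continuous and convex on `M` and `H`
continuous, strictly convex and nonnegative on `M`, if `μ ε` minimizes `F + ε • H` over `M`
for each `ε > 0`, then there is a unique `μ*` in `M` such that `μ ε → μ*` as `ε ↓ 0`
(along every positive sequence tending to zero), `μ*` minimizes `F` over `M`, and `μ*` is
the unique minimizer of `H` over the set of minimizers of `F` on `M`. -/
theorem penalized_expost_bayes_limit
    {E : Type*} [AddCommGroup E] [Module ℝ E] [TopologicalSpace E] [T2Space E]
    [IsTopologicalAddGroup E] [ContinuousSMul ℝ E]
    (M : Set E) (hMne : M.Nonempty) (hMcomp : IsCompact M) (hMconv : Convex ℝ M)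
    (F H : E → ℝ)
    (hFcont : ContinuousOn F M) (hFconv : ConvexOn ℝ M F)
    (hHcont : ContinuousOn H M) (hHconv : StrictConvexOn ℝ M H)
    (hHnonneg : ∀ m ∈ M, 0 ≤ H m)
    (μ : ℝ → E)
    (hμmem : ∀ ε : ℝ, 0 < ε → μ ε ∈ M)
    (hμopt : ∀ ε : ℝ, 0 < ε → ∀ m ∈ M, F (μ ε) + ε * H (μ ε) ≤ F m + ε * H m) :
    ∃! μstar : E, μstar ∈ M ∧
      (∀ εs : ℕ → ℝ, (∀ n, 0 < εs n) → Filter.Tendsto εs Filter.atTop (nhds 0) →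
        Filter.Tendsto (fun n => μ (εs n)) Filter.atTop (nhds μstar)) ∧
      (∀ m ∈ M, F μstar ≤ F m) ∧
      (∀ m ∈ M, (∀ m' ∈ M, F m ≤ F m') → H μstar ≤ H m) ∧
      (∀ m ∈ M, (∀ m' ∈ M, F m ≤ F m') → H m ≤ H μstar → m = μstar) := by
  classical
  -- a fixed positive sequence tending to 0
  set εs0 : ℕ → ℝ := fun n => 1 / (n + 1) with hεs0
  have hpos0 : ∀ n, 0 < εs0 n := fun n => by positivity
  have htend0 : Filter.Tendsto εs0 Filter.atTop (nhds 0) :=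
    tendsto_one_div_add_atTop_nhds_zero_nat
  obtain ⟨𝒰, h𝒰⟩ := Filter.exists_ultrafilter_le (Filter.atTop : Filter ℕ)
  -- the ultrafilter limit of μ (εs0 n)
  have hprin : (𝒰.map fun n => μ (εs0 n)) ≤ Filter.principal M := by
    rw [Filter.le_principal_iff]
    exact Filter.mem_map.2 (Filter.univ_mem' fun n => hμmem _ (hpos0 n))
  obtain ⟨μstar, hμstarM, hlim⟩ := hMcomp.ultrafilter_le_nhds _ hprin
  have hlim' : Filter.Tendsto (fun n => μ (εs0 n)) 𝒰 (nhds μstar) := hlim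
  obtain ⟨hFmin, hHmin⟩ := penalized_aux_limit M F H hFcont hHcont hHnonneg μ hμmem hμopt
    εs0 hpos0 𝒰 h𝒰 htend0 μstar hμstarM hlim'
  -- uniqueness of the H-minimizer among F-minimizers, via strict convexity
  have huniq : ∀ m ∈ M, (∀ m' ∈ M, F m ≤ F m') → H m ≤ H μstar → m = μstar := by
    intro m hm hmF hmH
    by_contra hne
    have hz : (1/2 : ℝ) • m + (1/2 : ℝ) • μstar ∈ M :=
      hMconv hm hμstarM (by norm_num) (by norm_num) (by norm_num)
    have hFz : F ((1/2 : ℝ) • m + (1/2 : ℝ) • μstar) ≤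
        (1/2 : ℝ) * F m + (1/2 : ℝ) * F μstar :=
      hFconv.2 hm hμstarM (by norm_num) (by norm_num) (by norm_num)
    have hHz : H ((1/2 : ℝ) • m + (1/2 : ℝ) • μstar) <
        (1/2 : ℝ) * H m + (1/2 : ℝ) * H μstar :=
      hHconv.2 hm hμstarM hne (by norm_num) (by norm_num) (by norm_num)
    have hFmμ : F m = F μstar := le_antisymm (hmF _ hμstarM) (hFmin _ hm)
    have hzF : ∀ m' ∈ M, F ((1/2 : ℝ) • m + (1/2 : ℝ) • μstar) ≤ F m' := by
      intro m' hm'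
      have := hFmin m' hm'
      linarith
    have := hHmin _ hz hzF
    linarith
  refine ⟨μstar, ⟨hμstarM, ?_, hFmin, hHmin, huniq⟩, ?_⟩
  · -- convergence along every positive null sequence
    intro εs hpos htend
    rw [Filter.tendsto_iff_ultrafilter]
    intro 𝒢 h𝒢
    have hprin' : (𝒢.map fun n => μ (εs n)) ≤ Filter.principal M := by
      rw [Filter.le_principal_iff]
      exact Filter.mem_map.2 (Filter.univ_mem' fun n => hμmem _ (hpos n))
    obtain ⟨m, hmM, hml⟩ := hMcomp.ultrafilter_le_nhds _ hprin'
    have hml' : Filter.Tendsto (fun n => μ (εs n)) 𝒢 (nhds m) := hml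
    obtain ⟨hmF, hmH⟩ := penalized_aux_limit M F H hFcont hHcont hHnonneg μ hμmem hμopt
      εs hpos 𝒢 h𝒢 htend m hmM hml'
    have : m = μstar := huniq m hmM hmF (hmH _ hμstarM hFmin)
    exact this ▸ hml'
  · rintro y ⟨hyM, -, hyF, hyH, -⟩
    exact huniq y hyM hyF (hyH _ hμstarM hFmin)
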